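/- If a graph G has n vertices and m ≥ 4n edges, then G has a subgraph with diameter at most 4 and at least m²/(8n²) edges. -/

import Mathlib

set_option linter.unusedSectionVars false
set_option linter.unusedVariables false
set_option linter.deprecated false




/-- The graph `H` has diameter at most `d` (distances measured within `H`, among
the vertices of `H`, i.e. those in its support). -/
def GraphDiamLE {V : Type*} (H : SimpleGraph V) (d : ℕ) : Prop :=
  ∀ a b : V, a ∈ H.support → b ∈ H.support → H.edist a b ≤ d

open Finset

section Aux
variable {V : Type*} [Fintype V] [DecidableEq V]

/-- The subgraph of edges touching the closed neighborhood of `v`. -/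
def ballGraph (G : SimpleGraph V) (v : V) : SimpleGraph V where
  Adj x y := G.Adj x y ∧ (x = v ∨ G.Adj v x ∨ y = v ∨ G.Adj v y)
  symm := ⟨by intro x y ⟨h1, h2⟩; exact ⟨h1.symm, by tauto⟩⟩
  loopless := ⟨fun x ⟨h, _⟩ => G.irrefl h⟩

lemma ballGraph_le (G : SimpleGraph V) (v : V) : ballGraph G v ≤ G := fun _ _ h => h.1

lemma adj_edist_le_one {H : SimpleGraph V} {a b : V} (h : H.Adj a b) :
    H.edist a b ≤ 1 :=
  le_of_eq (SimpleGraph.edist_eq_one_iff_adj.mpr h)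

lemma ballGraph_edist (G : SimpleGraph V) (v : V) {x : V}
    (hx : x ∈ (ballGraph G v).support) : (ballGraph G v).edist x v ≤ 2 := by
  obtain ⟨y, hxy⟩ := hx
  set H := ballGraph G v with hH
  obtain ⟨hadj, hc⟩ := hxy
  rcases hc with rfl | hvx | rfl | hvy
  · simp
  · have : H.Adj x v := ⟨hvx.symm, Or.inr (Or.inl hvx)⟩
    calc H.edist x v ≤ 1 := adj_edist_le_one this
      _ ≤ 2 := by norm_num
  · calc H.edist x y ≤ 1 := adj_edist_le_one (show H.Adj x y from ⟨hadj, by tauto⟩)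
      _ ≤ 2 := by norm_num
  · have h1 : H.Adj x y := ⟨hadj, by tauto⟩
    have h2 : H.Adj y v := ⟨hvy.symm, by tauto⟩
    calc H.edist x v ≤ H.edist x y + H.edist y v := SimpleGraph.edist_triangle
      _ ≤ 1 + 1 := add_le_add (adj_edist_le_one h1) (adj_edist_le_one h2)
      _ = 2 := by norm_num

lemma ballGraph_diam (G : SimpleGraph V) (v : V) : GraphDiamLE (ballGraph G v) 4 := by
  intro a b ha hb
  calc (ballGraph G v).edist a b ≤ (ballGraph G v).edist a v + (ballGraph G v).edist v b :=
        SimpleGraph.edist_triangle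
    _ ≤ 2 + 2 := by
        refine add_le_add (ballGraph_edist G v ha) ?_
        rw [SimpleGraph.edist_comm]; exact ballGraph_edist G v hb
    _ = 4 := by norm_num

lemma exists_good_ball (G : SimpleGraph V) [DecidableRel G.Adj]
    (hpos : 0 < Fintype.card V) :
    ∃ v : V, G.edgeFinset.card ^ 2 ≤
      (Fintype.card V) ^ 2 * (ballGraph G v).edgeSet.ncard := by
  classical
  set n := Fintype.card V with hn
  set m := G.edgeFinset.card with hm
  set f : V → ℕ := fun v => (ballGraph G v).edgeSet.ncard with hf
  set T : V → ℕ := fun v => G.degree v + ∑ x ∈ G.neighborFinset v, G.degree x with hT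
  -- Step A : T v ≤ 2 * f v
  have stepA : ∀ v, T v ≤ 2 * f v := by
    intro v
    haveI : Fintype (ballGraph G v).edgeSet := Fintype.ofFinite _
    have hfv : f v = (ballGraph G v).edgeFinset.card := by
      exact Set.ncard_eq_toFinset_card' _
    set S : Finset (Σ _ : V, V) :=
      (insert v (G.neighborFinset v)).sigma (fun x => G.neighborFinset x) with hS
    have hcardS : S.card = T v := by
      rw [hS, Finset.card_sigma, Finset.sum_insert (G.notMem_neighborFinset_self v)]
      simp [hT]
    have hmaps : ∀ p ∈ S, Sym2.mk p.1 p.2 ∈ (ballGraph G v).edgeFinset := by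
      rintro ⟨x, y⟩ hp
      rw [hS, Finset.mem_sigma] at hp
      obtain ⟨hx, hy⟩ := hp
      rw [SimpleGraph.mem_edgeFinset, SimpleGraph.mem_edgeSet]
      refine ⟨(SimpleGraph.mem_neighborFinset _ _ _).1 hy, ?_⟩
      rcases Finset.mem_insert.1 hx with rfl | hx
      · exact Or.inl rfl
      · exact Or.inr (Or.inl ((SimpleGraph.mem_neighborFinset _ _ _).1 hx))
    have hfib : ∀ e ∈ (ballGraph G v).edgeFinset,
        (S.filter (fun p => Sym2.mk p.1 p.2 = e)).card ≤ 2 := by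
      intro e _
      induction e with
      | _ a b =>
        have hsub : S.filter (fun p => Sym2.mk p.1 p.2 = Sym2.mk a b) ⊆
            {⟨a, b⟩, ⟨b, a⟩} := by
          rintro ⟨x, y⟩ hp
          rw [Finset.mem_filter] at hp
          have := Sym2.eq_iff.1 hp.2
          rcases this with ⟨rfl, rfl⟩ | ⟨rfl, rfl⟩
          · simp
          · simp
        exact (Finset.card_le_card hsub).trans (Finset.card_insert_le _ _ |>.trans (by simp))
    have h2 := Finset.card_le_mul_card_image_of_maps_to hmaps 2 hfib
    rw [hcardS] at h2
    rw [hfv]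
    exact h2
  -- Step B : ∑ v, T v = 2 * m + ∑ x, G.degree x ^ 2
  have exch : ∑ v, ∑ x ∈ G.neighborFinset v, G.degree x = ∑ x, G.degree x ^ 2 := by
    have h1 : ∀ v : V, ∑ x ∈ G.neighborFinset v, G.degree x
        = ∑ x, if G.Adj v x then G.degree x else 0 := by
      intro v
      rw [SimpleGraph.neighborFinset_eq_filter, Finset.sum_filter]
    simp_rw [h1]
    rw [Finset.sum_comm]
    have h2 : ∀ x : V, (∑ v, if G.Adj v x then G.degree x else 0) = G.degree x ^ 2 := by
      intro x
      have : ∀ v : V, (if G.Adj v x then G.degree x else 0) = if G.Adj x v then G.degree x else 0 :=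
        fun v => if_congr (G.adj_comm v x) rfl rfl
      simp_rw [this]
      rw [← Finset.sum_filter, Finset.sum_const, ← SimpleGraph.neighborFinset_eq_filter,
        SimpleGraph.card_neighborFinset_eq_degree]
      rw [smul_eq_mul, sq]
    simp_rw [h2]
  have stepB : ∑ x, G.degree x ^ 2 ≤ ∑ v, T v := by
    simp only [hT]
    rw [Finset.sum_add_distrib, exch]
    exact Nat.le_add_left _ _
  -- Step C : Cauchy-Schwarz
  have stepC : (2 * m) ^ 2 ≤ n * ∑ x, G.degree x ^ 2 := by
    have := sq_sum_le_card_mul_sum_sq (s := (Finset.univ : Finset V)) (f := fun x => G.degree x)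
    rwa [SimpleGraph.sum_degrees_eq_twice_card_edges, Finset.card_univ] at this
  -- combine
  by_contra hcon
  push_neg at hcon
  have hC : n ^ 2 * (∑ v, f v) + n ≤ n * m ^ 2 := by
    calc n ^ 2 * (∑ v, f v) + n = ∑ v : V, (n ^ 2 * f v + 1) := by
          rw [Finset.sum_add_distrib, ← Finset.mul_sum]
          simp [hn]
      _ ≤ ∑ v : V, m ^ 2 := Finset.sum_le_sum (fun v _ => by
            have hv := hcon v; simp only [hf]; omega)
      _ = n * m ^ 2 := by simp [hn, mul_comm]
  have hA : 4 * m ^ 2 ≤ n * (2 * ∑ v, f v) := by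
    calc 4 * m ^ 2 = (2 * m) ^ 2 := by ring
      _ ≤ n * ∑ x, G.degree x ^ 2 := stepC
      _ ≤ n * ∑ v, T v := Nat.mul_le_mul_left n stepB
      _ ≤ n * (2 * ∑ v, f v) := by
          refine Nat.mul_le_mul_left n ?_
          rw [Finset.mul_sum]
          exact Finset.sum_le_sum (fun v _ => stepA v)
  -- multiply hA by n and contradict
  have hA' : 4 * (n * m ^ 2) ≤ 2 * (n ^ 2 * ∑ v, f v) := by
    have := Nat.mul_le_mul_left n hA
    calc 4 * (n * m ^ 2) = n * (4 * m ^ 2) := by ring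
      _ ≤ n * (n * (2 * ∑ v, f v)) := Nat.mul_le_mul_left n hA
      _ = 2 * (n ^ 2 * ∑ v, f v) := by ring
  set a := n * m ^ 2 with ha
  set b := n ^ 2 * ∑ v, f v with hb
  clear_value a b
  omega


end Aux

/-- If a graph G has n vertices and m ≥ 4n edges, then G has a
subgraph with diameter at most 4 and at least m²/(8n²) edges. -/
theorem stmt_10 {V : Type*} [Fintype V] (G : SimpleGraph V) (n m : ℕ)
    (hn : n = Fintype.card V) (hm : m = G.edgeSet.ncard) (h : 4 * n ≤ m) :
    ∃ H : SimpleGraph V, H ≤ G ∧ GraphDiamLE H 4 ∧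
      (m : ℝ) ^ 2 / (8 * (n : ℝ) ^ 2) ≤ (H.edgeSet.ncard : ℝ) := by
  classical
  by_cases hn0 : Fintype.card V = 0
  · refine ⟨⊥, bot_le, ?_, ?_⟩
    · intro a b ha _
      obtain ⟨c, hc⟩ := ha
      exact absurd hc (by simp)
    · have hnz : (n : ℝ) = 0 := by rw [hn, hn0]; simp
      rw [hnz]
      simp
  · have hpos : 0 < Fintype.card V := Nat.pos_of_ne_zero hn0
    obtain ⟨v, hv⟩ := exists_good_ball G hpos
    refine ⟨ballGraph G v, ballGraph_le G v, ballGraph_diam G v, ?_⟩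
    have hm' : m = G.edgeFinset.card := by
      rw [hm]; exact Set.ncard_eq_toFinset_card' _
    rw [hm', hn] at *
    have hnpos : (0 : ℝ) < (Fintype.card V : ℝ) := by exact_mod_cast hpos
    rw [div_le_iff₀ (by positivity)]
    have hcast : ((G.edgeFinset.card : ℝ)) ^ 2 ≤ (Fintype.card V : ℝ) ^ 2 *
        ((ballGraph G v).edgeSet.ncard : ℝ) := by exact_mod_cast hv
    nlinarith [Nat.cast_nonneg (α := ℝ) (ballGraph G v).edgeSet.ncard]
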